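/- Fix a constant c > √2. For each n, define p_k = 1 if k ≤ 16c²·log n, and p_k = 1/2 + c·√((log n)/k) if k > 16c²·log n. Let w be a random binary word of length n in which the letters w₁,…,wₙ are independent and w_k equals 1 with probability p_k. Then the probability that w is prefix normal tends to 1 as n → ∞. -/

import Mathlib

/-- Number of ones of the infinite binary word `w` in the 0-indexed
half-open interval of positions `[a, b)`. Thus `cnt w j (j+k)` is the number
of 1s in the subword `w[j+1, j+k]` (1-indexed), and `cnt w 0 k` is the number
of 1s in the prefix of length `k`. -/
def cnt (w : ℕ → Bool) (a b : ℕ) : ℕ :=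
  ((Finset.Ico a b).filter (fun i => w i = true)).card

/-- Extend a binary word of length `n` to an infinite word by `false`s. -/
def ext {n : ℕ} (w : Fin n → Bool) : ℕ → Bool :=
  fun i => if h : i < n then w ⟨i, h⟩ else false

/-- A binary word of length `n` is prefix normal if the number of 1s in any
subword is at most the number of 1s in the prefix of the same length. -/
def IsPrefixNormal (n : ℕ) (w : ℕ → Bool) : Prop :=
  ∀ k j : ℕ, k ≤ n → j + k ≤ n → cnt w j (j + k) ≤ cnt w 0 k

/-- The probability `p_k` that the `k`-th letter (1-indexed) of the random
word of length `n` equals `1`: equal to `1` if `k ≤ 16 c² log n`, and to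
`1/2 + c √(log n / k)` otherwise. Logarithms are natural. -/
noncomputable def pr (c : ℝ) (n k : ℕ) : ℝ :=
  if (k : ℝ) ≤ 16 * c ^ 2 * Real.log n then 1
  else 1 / 2 + c * Real.sqrt (Real.log n / k)

/-- The probability of picking the word `w : Fin n → Bool` when the letters
are independent with `P(w_k = 1) = p_k` (positions 1-indexed). -/
noncomputable def wordProb (c : ℝ) (n : ℕ) (w : Fin n → Bool) : ℝ :=
  ∏ i : Fin n, (if w i then pr c n (i.1 + 1) else 1 - pr c n (i.1 + 1))

open Real Finset Filter

section Hoeffding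

lemma hD (p : ℝ) (hp0 : 0 ≤ p) (hp1 : p ≤ 1) (u : ℝ) : 0 < 1 - p + p * exp u := by
  rcases le_or_gt 1 (exp u) with h | h
  · nlinarith
  · nlinarith [exp_pos u]

lemma hasDerivAt_G (p : ℝ) (hp0 : 0 ≤ p) (hp1 : p ≤ 1) (u : ℝ) :
    HasDerivAt (fun u => p + u / 4 - p * exp u / (1 - p + p * exp u))
      (1 / 4 - p * exp u * (1 - p) / (1 - p + p * exp u) ^ 2) u := by
  have hden := hD p hp0 hp1 u
  have h1 : HasDerivAt (fun u : ℝ => p * exp u) (p * exp u) u :=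
    (Real.hasDerivAt_exp u).const_mul p
  have h2 : HasDerivAt (fun u : ℝ => 1 - p + p * exp u) (p * exp u) u := by
    simpa using h1.const_add (1 - p)
  have h3 : HasDerivAt (fun u : ℝ => p * exp u / (1 - p + p * exp u))
      ((p * exp u * (1 - p + p * exp u) - p * exp u * (p * exp u)) /
        (1 - p + p * exp u) ^ 2) u := h1.div h2 hden.ne'
  have h4 : HasDerivAt (fun u : ℝ => p + u / 4) (1 / 4) u := by
    simpa using ((hasDerivAt_id u).div_const 4).const_add p
  refine (h4.sub h3).congr_deriv ?_
  ring

lemma hasDerivAt_F (p : ℝ) (hp0 : 0 ≤ p) (hp1 : p ≤ 1) (u : ℝ) :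
    HasDerivAt (fun u => p * u + u ^ 2 / 8 - Real.log (1 - p + p * exp u))
      (p + u / 4 - p * exp u / (1 - p + p * exp u)) u := by
  have hden := hD p hp0 hp1 u
  have h1 : HasDerivAt (fun u : ℝ => p * exp u) (p * exp u) u :=
    (Real.hasDerivAt_exp u).const_mul p
  have h2 : HasDerivAt (fun u : ℝ => 1 - p + p * exp u) (p * exp u) u := by
    simpa using h1.const_add (1 - p)
  have h3 : HasDerivAt (fun u : ℝ => Real.log (1 - p + p * exp u))
      (p * exp u / (1 - p + p * exp u)) u := h2.log hden.ne'
  have h4 : HasDerivAt (fun u : ℝ => p * u + u ^ 2 / 8) (p + u / 4) u := by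
    have h5 : HasDerivAt (fun x : ℝ => p * x) p u := by
      simpa using (hasDerivAt_id u).const_mul p
    refine (h5.add ((hasDerivAt_pow 2 u).div_const 8)).congr_deriv ?_
    norm_num
    ring
  exact h4.sub h3

lemma hoeffding_core (p u : ℝ) (hp0 : 0 ≤ p) (hp1 : p ≤ 1) :
    (1 - p) * exp (-(p * u)) + p * exp ((1 - p) * u) ≤ exp (u ^ 2 / 8) := by
  set F : ℝ → ℝ := fun u => p * u + u ^ 2 / 8 - Real.log (1 - p + p * exp u) with hF
  set G : ℝ → ℝ := fun u => p + u / 4 - p * exp u / (1 - p + p * exp u) with hG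
  have hFdiff : ∀ x, DifferentiableAt ℝ F x := fun x =>
    (hasDerivAt_F p hp0 hp1 x).differentiableAt
  have hGmono : Monotone G := by
    apply monotone_of_deriv_nonneg
    · intro x
      exact (hasDerivAt_G p hp0 hp1 x).differentiableAt
    · intro x
      rw [(hasDerivAt_G p hp0 hp1 x).deriv]
      have hden := hD p hp0 hp1 x
      rw [sub_nonneg, div_le_iff₀ (by positivity)]
      nlinarith [sq_nonneg (1 - p - p * exp x), exp_pos x]
  have hG0 : G 0 = 0 := by simp [hG]
  have hF0 : F 0 = 0 := by simp [hF]
  have hFnonneg : 0 ≤ F u := by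
    rcases le_or_gt 0 u with h | h
    · have hmono : MonotoneOn F (Set.Ici (0:ℝ)) := by
        apply monotoneOn_of_deriv_nonneg (convex_Ici 0)
          ((Differentiable.continuous hFdiff).continuousOn)
          (fun x _ => (hFdiff x).differentiableWithinAt)
        intro x hx
        rw [(hasDerivAt_F p hp0 hp1 x).deriv]
        have hx0 : (0:ℝ) ≤ x := le_of_lt (by simpa using hx)
        have := hGmono hx0
        rw [hG0] at this
        exact this
      have := hmono (Set.self_mem_Ici) (Set.mem_Ici.mpr h) h
      linarith [hF0 ▸ this]
    · have hanti : AntitoneOn F (Set.Iic (0:ℝ)) := by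
        apply antitoneOn_of_deriv_nonpos (convex_Iic 0)
          ((Differentiable.continuous hFdiff).continuousOn)
          (fun x _ => (hFdiff x).differentiableWithinAt)
        intro x hx
        rw [(hasDerivAt_F p hp0 hp1 x).deriv]
        have hx0 : x ≤ (0:ℝ) := le_of_lt (by simpa using hx)
        have := hGmono hx0
        rw [hG0] at this
        exact this
      have := hanti (Set.mem_Iic.mpr h.le) (Set.self_mem_Iic) h.le
      linarith [hF0 ▸ this]
  have hden := hD p hp0 hp1 u
  have hDle : 1 - p + p * exp u ≤ exp (p * u + u ^ 2 / 8) := by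
    rw [← Real.exp_log hden]
    apply exp_le_exp.mpr
    have h2 : 0 ≤ p * u + u ^ 2 / 8 - Real.log (1 - p + p * exp u) := hFnonneg
    linarith
  have key : (1 - p) * exp (-(p * u)) + p * exp ((1 - p) * u)
      = exp (-(p * u)) * (1 - p + p * exp u) := by
    rw [show (1 - p) * u = -(p * u) + u by ring, exp_add]
    ring
  rw [key]
  calc exp (-(p * u)) * (1 - p + p * exp u)
      ≤ exp (-(p * u)) * exp (p * u + u ^ 2 / 8) := by
        apply mul_le_mul_of_nonneg_left hDle (le_of_lt (exp_pos _))
    _ = exp (u ^ 2 / 8) := by rw [← exp_add]; norm_num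

lemma bernoulli_mgf_le (p x y l : ℝ) (hp0 : 0 ≤ p) (hp1 : p ≤ 1) :
    (1 - p) * Real.exp (l * x) + p * Real.exp (l * y)
      ≤ Real.exp (l * ((1 - p) * x + p * y) + l ^ 2 * (y - x) ^ 2 / 8) := by
  have hcore := hoeffding_core p (l * (y - x)) hp0 hp1
  have e1 : l * x = l * ((1 - p) * x + p * y) + (-(p * (l * (y - x)))) := by ring
  have e2 : l * y = l * ((1 - p) * x + p * y) + ((1 - p) * (l * (y - x))) := by ring
  rw [e1, e2]
  have key : (1 - p) * Real.exp (l * ((1 - p) * x + p * y) + (-(p * (l * (y - x)))))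
      + p * Real.exp (l * ((1 - p) * x + p * y) + ((1 - p) * (l * (y - x))))
      = Real.exp (l * ((1 - p) * x + p * y))
        * ((1 - p) * Real.exp (-(p * (l * (y - x)))) + p * Real.exp ((1 - p) * (l * (y - x)))) := by
    rw [Real.exp_add, Real.exp_add]
    ring
  rw [key]
  calc Real.exp (l * ((1 - p) * x + p * y))
        * ((1 - p) * Real.exp (-(p * (l * (y - x)))) + p * Real.exp ((1 - p) * (l * (y - x))))
      ≤ Real.exp (l * ((1 - p) * x + p * y)) * Real.exp ((l * (y - x)) ^ 2 / 8) :=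
        mul_le_mul_of_nonneg_left hcore (Real.exp_pos _).le
    _ = Real.exp (l * ((1 - p) * x + p * y) + l ^ 2 * (y - x) ^ 2 / 8) := by
        rw [← Real.exp_add, mul_pow]

end Hoeffding

lemma log_nat_nonneg (n : ℕ) : 0 ≤ Real.log n := by
  rcases Nat.eq_zero_or_pos n with h | h
  · simp [h]
  · exact Real.log_nonneg (by exact_mod_cast h)

lemma pr_nonneg (c : ℝ) (hc : 0 < c) (n k : ℕ) : 0 ≤ pr c n k := by
  unfold pr
  split
  · norm_num
  · positivity

lemma pr_le_one (c : ℝ) (hc : 0 < c) (n k : ℕ) (hk : 1 ≤ k) : pr c n k ≤ 1 := by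
  unfold pr
  split
  · exact le_refl 1
  · rename_i h
    push_neg at h
    have hL : 0 ≤ Real.log n := log_nat_nonneg n
    have hk0 : (0:ℝ) < k := by exact_mod_cast hk
    have h1 : Real.log n / k ≤ (1 / (4 * c)) ^ 2 := by
      rw [div_le_iff₀ hk0, show ((1:ℝ) / (4 * c)) ^ 2 = 1 / (16 * c ^ 2) by ring]
      rw [div_mul_eq_mul_div, le_div_iff₀ (by positivity)]
      nlinarith
    have h2 : Real.sqrt (Real.log n / k) ≤ 1 / (4 * c) := by
      calc Real.sqrt (Real.log n / k) ≤ Real.sqrt ((1 / (4 * c)) ^ 2) := Real.sqrt_le_sqrt h1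
        _ = 1 / (4 * c) := Real.sqrt_sq (by positivity)
    have h4 : c * Real.sqrt (Real.log n / k) ≤ 1 / 4 := by
      calc c * Real.sqrt (Real.log n / k) ≤ c * (1 / (4 * c)) :=
            mul_le_mul_of_nonneg_left h2 hc.le
        _ = 1 / 4 := by field_simp
    linarith

lemma wordProb_nonneg (c : ℝ) (hc : 0 < c) (n : ℕ) (w : Fin n → Bool) :
    0 ≤ wordProb c n w := by
  apply Finset.prod_nonneg
  intro i _
  split
  · exact pr_nonneg c hc n _
  · linarith [pr_le_one c hc n (i.1 + 1) (Nat.le_add_left 1 i.1)]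

/-- product-measure expectation of a product functional -/
lemma sum_wordProb_mul_prod (c : ℝ) (n : ℕ) (f : Fin n → Bool → ℝ) :
    ∑ w : Fin n → Bool, wordProb c n w * ∏ i : Fin n, f i (w i)
      = ∏ i : Fin n, ((1 - pr c n (i.1 + 1)) * f i false + pr c n (i.1 + 1) * f i true) := by
  classical
  have : ∀ w : Fin n → Bool, wordProb c n w * ∏ i : Fin n, f i (w i)
      = ∏ i : Fin n, ((fun (i : Fin n) (b : Bool) =>
          (if b then pr c n (i.1 + 1) else 1 - pr c n (i.1 + 1)) * f i b) i (w i)) := by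
    intro w
    rw [wordProb, ← Finset.prod_mul_distrib]
  simp_rw [this]
  have key : (∑ w : Fin n → Bool, ∏ i : Fin n,
        (if w i then pr c n (i.1 + 1) else 1 - pr c n (i.1 + 1)) * f i (w i))
      = ∏ i : Fin n, ∑ b : Bool,
        (if b then pr c n (i.1 + 1) else 1 - pr c n (i.1 + 1)) * f i b :=
    (Fintype.prod_sum fun (i : Fin n) (b : Bool) =>
      (if b then pr c n (i.1 + 1) else 1 - pr c n (i.1 + 1)) * f i b).symm
  rw [key]
  apply Finset.prod_congr rfl
  intro i _
  rw [Fintype.sum_bool]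
  simp
  ring

lemma sum_wordProb (c : ℝ) (n : ℕ) : ∑ w : Fin n → Bool, wordProb c n w = 1 := by
  have := sum_wordProb_mul_prod c n (fun _ _ => 1)
  simpa using this

open scoped Classical in
lemma chernoff (c : ℝ) (hc : 0 < c) (n : ℕ) (g : Fin n → Bool → ℝ) (t l : ℝ) (hl : 0 ≤ l) :
    ∑ w ∈ Finset.univ.filter (fun w : Fin n → Bool => t ≤ ∑ i : Fin n, g i (w i)),
        wordProb c n w
    ≤ exp (l * ((∑ i : Fin n, ((1 - pr c n (i.1 + 1)) * g i false + pr c n (i.1 + 1) * g i true)) - t)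
        + l ^ 2 * (∑ i : Fin n, (g i true - g i false) ^ 2) / 8) := by
  set P := wordProb c n with hP
  have step1 : ∑ w ∈ Finset.univ.filter (fun w : Fin n → Bool => t ≤ ∑ i : Fin n, g i (w i)), P w
      ≤ ∑ w : Fin n → Bool, P w * exp (l * ((∑ i : Fin n, g i (w i)) - t)) := by
    rw [← Finset.sum_filter_add_sum_filter_not Finset.univ
      (fun w : Fin n → Bool => t ≤ ∑ i : Fin n, g i (w i))
      (fun w => P w * exp (l * ((∑ i : Fin n, g i (w i)) - t)))]
    have h1 : ∀ w ∈ Finset.univ.filter (fun w : Fin n → Bool => t ≤ ∑ i : Fin n, g i (w i)),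
        P w ≤ P w * exp (l * ((∑ i : Fin n, g i (w i)) - t)) := by
      intro w hw
      simp only [Finset.mem_filter] at hw
      have h2 : (1:ℝ) ≤ exp (l * ((∑ i : Fin n, g i (w i)) - t)) := by
        rw [show (1:ℝ) = exp 0 by simp]
        apply exp_le_exp.mpr
        have := hw.2
        nlinarith
      nlinarith [wordProb_nonneg c hc n w, h2]
    have h3 : 0 ≤ ∑ w ∈ Finset.univ.filter
        (fun w : Fin n → Bool => ¬ t ≤ ∑ i : Fin n, g i (w i)),
        P w * exp (l * ((∑ i : Fin n, g i (w i)) - t)) := by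
      apply Finset.sum_nonneg
      intro w _
      have := wordProb_nonneg c hc n w
      positivity
    linarith [Finset.sum_le_sum h1]
  have step2 : ∑ w : Fin n → Bool, P w * exp (l * ((∑ i : Fin n, g i (w i)) - t))
      = exp (- (l * t)) * ∏ i : Fin n,
        ((1 - pr c n (i.1 + 1)) * exp (l * g i false) + pr c n (i.1 + 1) * exp (l * g i true)) := by
    rw [← sum_wordProb_mul_prod c n (fun i b => exp (l * g i b)), Finset.mul_sum]
    apply Finset.sum_congr rfl
    intro w _
    rw [mul_sub, exp_sub, Finset.mul_sum, exp_sum, exp_neg]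
    rw [hP]
    ring
  have step3 : ∏ i : Fin n,
        ((1 - pr c n (i.1 + 1)) * exp (l * g i false) + pr c n (i.1 + 1) * exp (l * g i true))
      ≤ ∏ i : Fin n, exp (l * ((1 - pr c n (i.1 + 1)) * g i false + pr c n (i.1 + 1) * g i true)
          + l ^ 2 * (g i true - g i false) ^ 2 / 8) := by
    apply Finset.prod_le_prod
    · intro i _
      have h0 := pr_nonneg c hc n (i.1 + 1)
      have h1 := pr_le_one c hc n (i.1 + 1) (Nat.le_add_left 1 i.1)
      have e0 := exp_pos (l * g i false)
      have e1 := exp_pos (l * g i true)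
      nlinarith
    · intro i _
      exact bernoulli_mgf_le _ _ _ l (pr_nonneg c hc n _)
        (pr_le_one c hc n _ (Nat.le_add_left 1 i.1))
  calc ∑ w ∈ Finset.univ.filter (fun w : Fin n → Bool => t ≤ ∑ i : Fin n, g i (w i)), P w
      ≤ ∑ w : Fin n → Bool, P w * exp (l * ((∑ i : Fin n, g i (w i)) - t)) := step1
    _ = exp (-(l * t)) * ∏ i : Fin n,
        ((1 - pr c n (i.1 + 1)) * exp (l * g i false) + pr c n (i.1 + 1) * exp (l * g i true)) := step2
    _ ≤ exp (-(l * t)) * ∏ i : Fin n,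
        exp (l * ((1 - pr c n (i.1 + 1)) * g i false + pr c n (i.1 + 1) * g i true)
          + l ^ 2 * (g i true - g i false) ^ 2 / 8) :=
        mul_le_mul_of_nonneg_left step3 (le_of_lt (exp_pos _))
    _ = exp (-(l * t) + ∑ i : Fin n,
          (l * ((1 - pr c n (i.1 + 1)) * g i false + pr c n (i.1 + 1) * g i true)
            + l ^ 2 * (g i true - g i false) ^ 2 / 8)) := by
        rw [← exp_sum, ← exp_add]
    _ = exp (l * ((∑ i : Fin n, ((1 - pr c n (i.1 + 1)) * g i false + pr c n (i.1 + 1) * g i true)) - t)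
          + l ^ 2 * (∑ i : Fin n, (g i true - g i false) ^ 2) / 8) := by
        congr 1
        rw [Finset.sum_add_distrib, ← Finset.mul_sum, ← Finset.sum_div, ← Finset.mul_sum]
        ring


section Aux

/- ===== counting helpers ===== -/

lemma cnt_le (w : ℕ → Bool) (a b : ℕ) : cnt w a b ≤ b - a := by
  calc cnt w a b ≤ (Finset.Ico a b).card := Finset.card_filter_le _ _
    _ = b - a := Nat.card_Ico a b

lemma cnt_split (w : ℕ → Bool) (a b c : ℕ) (hab : a ≤ b) (hbc : b ≤ c) :
    cnt w a c = cnt w a b + cnt w b c := by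
  unfold cnt
  rw [← Finset.Ico_union_Ico_eq_Ico hab hbc, Finset.filter_union,
    Finset.card_union_of_disjoint]
  exact Finset.disjoint_filter_filter (Finset.Ico_disjoint_Ico_consecutive a b c)

lemma exists_false_of_cnt_lt (w : ℕ → Bool) (l : ℕ) (h : cnt w 0 l < l) :
    ∃ i < l, w i = false := by
  by_contra hcon
  push_neg at hcon
  have : ∀ i ∈ Finset.Ico 0 l, w i = true := by
    intro i hi
    simp only [Finset.mem_Ico] at hi
    have := hcon i hi.2
    simpa [Bool.not_eq_false] using this
  have : cnt w 0 l = l := by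
    unfold cnt
    rw [Finset.filter_true_of_mem this]
    simp
  omega

lemma sum_fin_ite (n a b : ℕ) (hb : b ≤ n) (f : ℕ → ℝ) :
    ∑ i : Fin n, (if a ≤ i.1 ∧ i.1 < b then f i.1 else 0) = ∑ j ∈ Finset.Ico a b, f j := by
  rw [Fin.sum_univ_eq_sum_range (fun j => if a ≤ j ∧ j < b then f j else 0) n]
  have h1 : ∀ j, (if a ≤ j ∧ j < b then f j else 0) = (if j ∈ Finset.Ico a b then f j else 0) := by
    intro j; simp [Finset.mem_Ico]
  simp_rw [h1]
  rw [Finset.sum_ite_mem, Finset.inter_eq_right.mpr]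
  intro j hj
  simp only [Finset.mem_Ico] at hj
  simp only [Finset.mem_range]
  omega

lemma cnt_eq_sum {n : ℕ} (w : Fin n → Bool) (a b : ℕ) (hb : b ≤ n) :
    (cnt (ext w) a b : ℝ)
      = ∑ i : Fin n, (if a ≤ i.1 ∧ i.1 < b then (if w i then (1:ℝ) else 0) else 0) := by
  have h1 : ∀ i : Fin n, (if w i then (1:ℝ) else 0) = (if ext w i.1 then (1:ℝ) else 0) := by
    intro i
    have : ext w i.1 = w i := by simp [_root_.ext, i.2]
    rw [this]
  simp_rw [h1]
  rw [sum_fin_ite n a b hb (fun j => if ext w j then (1:ℝ) else 0)]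
  unfold cnt
  rw [Finset.card_filter]
  push_cast
  rfl

/- ===== telescoping sqrt sum ===== -/

lemma sqrt_telescope (s t : ℕ) (h : s ≤ t) :
    2 * (Real.sqrt (t + 1) - Real.sqrt (s + 1))
      ≤ ∑ j ∈ Finset.Ico s t, 1 / Real.sqrt (j + 1) := by
  induction t, h using Nat.le_induction with
  | base => simp
  | succ t ht ih =>
    rw [Finset.sum_Ico_succ_top ht]
    have key : 2 * (Real.sqrt (t + 1 + 1) - Real.sqrt (t + 1)) ≤ 1 / Real.sqrt (t + 1) := by
      have hx : (0:ℝ) < Real.sqrt (t + 1) := Real.sqrt_pos.mpr (by positivity)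
      have hy : (0:ℝ) ≤ Real.sqrt (t + 1 + 1) := Real.sqrt_nonneg _
      have hx2 : Real.sqrt (t + 1) ^ 2 = (t:ℝ) + 1 := Real.sq_sqrt (by positivity)
      have hy2 : Real.sqrt (t + 1 + 1) ^ 2 = (t:ℝ) + 2 := by
        rw [Real.sq_sqrt (by positivity)]; ring
      rw [le_div_iff₀ hx]
      nlinarith [sq_nonneg (Real.sqrt (t + 1 + 1) - Real.sqrt (t + 1))]
    have : ((t:ℝ) + 1 + 1) = ((t + 1 : ℕ) : ℝ) + 1 := by push_cast; ring
    rw [this] at key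
    linarith

end Aux

section Sums
variable (c : ℝ) (n : ℕ)
local notation "L" => Real.log n
local notation "m" => Nat.floor (16 * c ^ 2 * Real.log n)

lemma pr_eq_formula (hc : 0 < c) (k : ℕ) (hk : m < k) :
    pr c n k = 1 / 2 + c * Real.sqrt (L / k) := by
  unfold pr
  rw [if_neg]
  push_neg
  calc 16 * c ^ 2 * L < (m + 1 : ℕ) := by
        push_cast
        exact Nat.lt_floor_add_one _
    _ ≤ (k : ℝ) := by exact_mod_cast hk

lemma pr_eq_one (k : ℕ) (hk1 : 1 ≤ k) (hk : k ≤ m) : pr c n k = 1 := by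
  unfold pr
  rw [if_pos]
  exact (Nat.le_floor_iff (by positivity)).mp hk

/-- window sum upper bound -/
lemma window_sum_le (hc : 0 < c) (a l : ℕ) (hml : m < l) (hla : l ≤ a) :
    ∑ j ∈ Finset.Ico a (a + l), pr c n (j + 1)
      ≤ l / 2 + c * Real.sqrt l * Real.sqrt L := by
  have hL : (0:ℝ) ≤ L := log_nat_nonneg n
  have hl0 : 0 < l := lt_of_le_of_lt (Nat.zero_le m) hml
  have hbound : ∀ j ∈ Finset.Ico a (a + l), pr c n (j + 1) ≤ 1 / 2 + c * Real.sqrt (L / l) := by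
    intro j hj
    simp only [Finset.mem_Ico] at hj
    have hmj : m < j + 1 := by omega
    rw [pr_eq_formula c n hc (j + 1) hmj]
    have h1 : L / (j + 1 : ℕ) ≤ L / l := by
      apply div_le_div_of_nonneg_left hL (by exact_mod_cast hl0)
      exact_mod_cast (by omega : l ≤ j + 1)
    have := Real.sqrt_le_sqrt h1
    nlinarith
  calc ∑ j ∈ Finset.Ico a (a + l), pr c n (j + 1)
      ≤ (Finset.Ico a (a + l)).card • (1 / 2 + c * Real.sqrt (L / l)) :=
        Finset.sum_le_card_nsmul _ _ _ hbound
    _ = l * (1 / 2 + c * Real.sqrt (L / l)) := by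
        rw [Nat.card_Ico] 
        rw [nsmul_eq_mul]
        simp
    _ = l / 2 + c * ((l : ℝ) * Real.sqrt (L / l)) := by ring
    _ = l / 2 + c * Real.sqrt l * Real.sqrt L := by
        rw [Real.sqrt_div hL]
        rw [show (l : ℝ) * (Real.sqrt L / Real.sqrt l) = ((l : ℝ) / Real.sqrt l) * Real.sqrt L by ring]
        rw [Real.div_sqrt]
        ring

/-- prefix sum lower bound -/
lemma prefix_sum_ge (hc : 0 < c) (l : ℕ) (hml : m < l) :
    (m : ℝ) / 2 + l / 2 + 2 * c * Real.sqrt L * (Real.sqrt l - Real.sqrt (m + 1))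
      ≤ ∑ j ∈ Finset.Ico 0 l, pr c n (j + 1) := by
  have hL : (0:ℝ) ≤ L := log_nat_nonneg n
  rw [← Finset.sum_Ico_consecutive _ (Nat.zero_le m) (le_of_lt hml)]
  have h1 : ∑ j ∈ Finset.Ico 0 m, pr c n (j + 1) = m := by
    have hall : ∀ j ∈ Finset.Ico 0 m, pr c n (j + 1) = 1 := by
      intro j hj
      simp only [Finset.mem_Ico] at hj
      exact pr_eq_one c n (j + 1) (by omega) (by omega)
    rw [Finset.sum_congr rfl hall, Finset.sum_const, Nat.card_Ico]
    simp
  have h2 : ∑ j ∈ Finset.Ico m l, pr c n (j + 1)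
      = ∑ j ∈ Finset.Ico m l, (1 / 2 + c * (Real.sqrt L * (1 / Real.sqrt (j + 1)))) := by
    apply Finset.sum_congr rfl
    intro j hj
    simp only [Finset.mem_Ico] at hj
    rw [pr_eq_formula c n hc (j + 1) (by omega)]
    rw [Real.sqrt_div hL]
    push_cast
    ring
  rw [h1, h2, Finset.sum_add_distrib, Finset.sum_const, Nat.card_Ico, ← Finset.mul_sum,
    ← Finset.mul_sum]
  have h4 : Real.sqrt (l : ℝ) ≤ Real.sqrt ((l : ℝ) + 1) := Real.sqrt_le_sqrt (by linarith)
  have hml' : (m : ℝ) ≤ (l : ℝ) := by exact_mod_cast le_of_lt hml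
  have h6 : 2 * (Real.sqrt l - Real.sqrt ((m : ℝ) + 1))
      ≤ ∑ j ∈ Finset.Ico m l, 1 / Real.sqrt ((j : ℝ) + 1) := by
    have h3 := sqrt_telescope m l (le_of_lt hml)
    nlinarith
  have h7 : c * Real.sqrt L * (2 * (Real.sqrt l - Real.sqrt ((m : ℝ) + 1)))
      ≤ c * (Real.sqrt L * (∑ j ∈ Finset.Ico m l, 1 / Real.sqrt ((j : ℝ) + 1))) := by
    rw [show c * Real.sqrt L * (2 * (Real.sqrt l - Real.sqrt ((m : ℝ) + 1)))
      = c * (Real.sqrt L * (2 * (Real.sqrt l - Real.sqrt ((m : ℝ) + 1)))) by ring]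
    apply mul_le_mul_of_nonneg_left _ hc.le
    apply mul_le_mul_of_nonneg_left h6 (Real.sqrt_nonneg _)
  have hcast : (((l - m : ℕ)) : ℝ) = (l : ℝ) - m := by
    rw [Nat.cast_sub (le_of_lt hml)]
  rw [nsmul_eq_mul, hcast]
  linarith [h7]
end Sums

set_option maxHeartbeats 1000000 in
open scoped Classical in
lemma pair_bound (c : ℝ) (hc : 0 < c) (n a l : ℕ) :
    ∑ w ∈ Finset.univ.filter (fun w : Fin n → Bool =>
        l ≤ a ∧ a + l ≤ n ∧ cnt (ext w) 0 l < cnt (ext w) a (a + l)),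
      wordProb c n w ≤ Real.exp (-(c ^ 2) * Real.log n) := by
  set m := Nat.floor (16 * c ^ 2 * Real.log n) with hm
  set L := Real.log n with hL
  have hL0 : 0 ≤ L := log_nat_nonneg n
  by_cases hla : l ≤ a
  swap
  · rw [Finset.filter_false_of_mem (fun w _ => by tauto), Finset.sum_empty]
    positivity
  by_cases hn : a + l ≤ n
  swap
  · rw [Finset.filter_false_of_mem (fun w _ => by tauto), Finset.sum_empty]
    positivity
  by_cases hml : l ≤ m
  -- small l: probability zero
  · have hzero : ∀ w ∈ Finset.univ.filter (fun w : Fin n → Bool =>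
        l ≤ a ∧ a + l ≤ n ∧ cnt (ext w) 0 l < cnt (ext w) a (a + l)), wordProb c n w = 0 := by
      intro w hw
      simp only [Finset.mem_filter] at hw
      obtain ⟨-, -, -, hcnt⟩ := hw
      have h1 : cnt (ext w) a (a + l) ≤ l := by
        have := cnt_le (ext w) a (a + l)
        omega
      have h2 : cnt (ext w) 0 l < l := by omega
      obtain ⟨i, hil, hif⟩ := exists_false_of_cnt_lt (ext w) l h2
      have hin : i < n := by omega
      have hwi : w ⟨i, hin⟩ = false := by
        have : ext w i = w ⟨i, hin⟩ := by simp [_root_.ext, hin]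
        rw [← this]; exact hif
      apply Finset.prod_eq_zero (Finset.mem_univ (⟨i, hin⟩ : Fin n))
      rw [hwi]
      simp only [Bool.false_eq_true, if_false]
      rw [pr_eq_one c n (i + 1) (by omega) (by omega)]
      ring
    rw [Finset.sum_congr rfl hzero, Finset.sum_const, smul_zero]
    positivity
  -- main case
  push_neg at hml
  set g : Fin n → Bool → ℝ := fun i b =>
    if a ≤ i.1 ∧ i.1 < a + l then (if b then 1 else 0)
    else if i.1 < l then (if b then 0 else 1) else 0 with hg
  have hl0 : 0 < l := lt_of_le_of_lt (Nat.zero_le m) hml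
  have hln : l ≤ n := by omega
  -- pointwise decomposition of g
  have hgdec : ∀ (i : Fin n) (b : Bool), g i b
      = (if a ≤ i.1 ∧ i.1 < a + l then (if b then (1:ℝ) else 0) else 0)
      + (if 0 ≤ i.1 ∧ i.1 < l then (1 - (if b then (1:ℝ) else 0)) else 0) := by
    intro i b
    simp only [hg]
    by_cases h1 : a ≤ i.1 ∧ i.1 < a + l
    · have : ¬ i.1 < l := by omega
      simp [h1, this]
    · by_cases h2 : i.1 < l
      · simp only [h1, h2, if_true, if_false]
        cases b <;> simp
      · simp [h1, h2]
  -- the sum identity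
  have hS : ∀ w : Fin n → Bool, ∑ i : Fin n, g i (w i)
      = (cnt (ext w) a (a + l) : ℝ) + l - cnt (ext w) 0 l := by
    intro w
    have := Finset.sum_congr rfl (fun i (_ : i ∈ Finset.univ) => hgdec i (w i))
    rw [this, Finset.sum_add_distrib]
    have e1 := (cnt_eq_sum w a (a + l) hn).symm
    have e2 : ∑ i : Fin n, (if 0 ≤ i.1 ∧ i.1 < l then (1 - (if w i then (1:ℝ) else 0)) else 0)
        = (l : ℝ) - cnt (ext w) 0 l := by
      have e3 : ∀ i : Fin n, (if 0 ≤ i.1 ∧ i.1 < l then (1 - (if w i then (1:ℝ) else 0)) else 0)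
          = (if 0 ≤ i.1 ∧ i.1 < l then (1:ℝ) else 0)
            - (if 0 ≤ i.1 ∧ i.1 < l then (if w i then (1:ℝ) else 0) else 0) := by
        intro i
        by_cases h : i.1 < l <;> simp [h]
      rw [Finset.sum_congr rfl (fun i _ => e3 i), Finset.sum_sub_distrib]
      rw [← cnt_eq_sum w 0 l hln]
      rw [sum_fin_ite n 0 l hln (fun _ => (1:ℝ)), Finset.sum_const, Nat.card_Ico]
      simp
    rw [e1, e2]
    ring
  -- mean computation
  have hmu : ∑ i : Fin n, ((1 - pr c n (i.1 + 1)) * g i false + pr c n (i.1 + 1) * g i true)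
      = (∑ j ∈ Finset.Ico a (a + l), pr c n (j + 1)) + (l : ℝ)
        - ∑ j ∈ Finset.Ico 0 l, pr c n (j + 1) := by
    have hpt : ∀ i : Fin n, (1 - pr c n (i.1 + 1)) * g i false + pr c n (i.1 + 1) * g i true
        = (if a ≤ i.1 ∧ i.1 < a + l then pr c n (i.1 + 1) else 0)
        + ((if 0 ≤ i.1 ∧ i.1 < l then (1:ℝ) else 0)
            - (if 0 ≤ i.1 ∧ i.1 < l then pr c n (i.1 + 1) else 0)) := by
      intro i
      simp only [hg]
      by_cases h1 : a ≤ i.1 ∧ i.1 < a + l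
      · have h2 : ¬ i.1 < l := by omega
        simp [h1, h2]
      · by_cases h2 : i.1 < l
        · simp [h1, h2]; try ring
        · simp [h1, h2]
    rw [Finset.sum_congr rfl (fun i _ => hpt i), Finset.sum_add_distrib,
      Finset.sum_sub_distrib, sum_fin_ite n a (a + l) hn (fun j => pr c n (j + 1)),
      sum_fin_ite n 0 l hln (fun _ => (1:ℝ)), sum_fin_ite n 0 l hln (fun j => pr c n (j + 1)),
      Finset.sum_const, Nat.card_Ico]
    simp
    try ring
  -- range-squared computation
  have hr : ∑ i : Fin n, (g i true - g i false) ^ 2 = 2 * (l : ℝ) := by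
    have hpt : ∀ i : Fin n, (g i true - g i false) ^ 2
        = (if a ≤ i.1 ∧ i.1 < a + l then (1:ℝ) else 0)
        + (if 0 ≤ i.1 ∧ i.1 < l then (1:ℝ) else 0) := by
      intro i
      simp only [hg]
      by_cases h1 : a ≤ i.1 ∧ i.1 < a + l
      · have h2 : ¬ i.1 < l := by omega
        simp [h1, h2]
      · by_cases h2 : i.1 < l <;> simp [h1, h2]
    rw [Finset.sum_congr rfl (fun i _ => hpt i), Finset.sum_add_distrib,
      sum_fin_ite n a (a + l) hn (fun _ => (1:ℝ)), sum_fin_ite n 0 l hln (fun _ => (1:ℝ)),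
      Finset.sum_const, Finset.sum_const, Nat.card_Ico, Nat.card_Ico]
    simp
    try ring
  -- event inclusion
  set lam := 2 * c * Real.sqrt (L / l) with hlam
  have hlam0 : 0 ≤ lam := by positivity
  have hsub : Finset.univ.filter (fun w : Fin n → Bool =>
      l ≤ a ∧ a + l ≤ n ∧ cnt (ext w) 0 l < cnt (ext w) a (a + l))
      ⊆ Finset.univ.filter (fun w : Fin n → Bool => ((l : ℝ) + 1) ≤ ∑ i : Fin n, g i (w i)) := by
    intro w hw
    simp only [Finset.mem_filter] at hw ⊢
    refine ⟨Finset.mem_univ w, ?_⟩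
    obtain ⟨-, -, -, hcnt⟩ := hw
    rw [hS w]
    have hcast : (cnt (ext w) 0 l : ℝ) + 1 ≤ (cnt (ext w) a (a + l) : ℝ) := by
      exact_mod_cast hcnt
    linarith
  have hmain := chernoff c hc n g ((l : ℝ) + 1) lam hlam0
  -- square root facts
  have hsl : Real.sqrt (L / l) * Real.sqrt l = Real.sqrt L := by
    rw [Real.sqrt_div hL0, div_mul_cancel₀]
    exact (Real.sqrt_pos.mpr (by exact_mod_cast hl0)).ne'
  have hlam2 : lam ^ 2 = 4 * c ^ 2 * (L / (l : ℝ)) := by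
    rw [hlam, mul_pow, mul_pow, Real.sq_sqrt (by positivity)]
    ring
  -- bounds on the sums
  have hup := window_sum_le c n hc a l hml hla
  have hlow := prefix_sum_ge c n hc l hml
  rw [← hL] at hup hlow
  rw [← hm] at hlow
  have hm16 : (m : ℝ) ≤ 16 * c ^ 2 * L := Nat.floor_le (by positivity)
  have hm16' : 16 * c ^ 2 * L < (m : ℝ) + 1 := Nat.lt_floor_add_one _
  have hkey : 2 * c * Real.sqrt L * Real.sqrt ((m : ℝ) + 1) ≤ 8 * c ^ 2 * L + 1 / 4 := by
    have hs1 : Real.sqrt L ^ 2 = L := Real.sq_sqrt hL0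
    have hs2 : Real.sqrt ((m : ℝ) + 1) ^ 2 = (m : ℝ) + 1 := Real.sq_sqrt (by positivity)
    have expand : (2 * c * Real.sqrt L * Real.sqrt ((m : ℝ) + 1)) ^ 2
        = 4 * c ^ 2 * L * ((m : ℝ) + 1) := by
      rw [mul_pow, mul_pow, mul_pow, hs1, hs2]
      ring
    have hsq : (2 * c * Real.sqrt L * Real.sqrt ((m : ℝ) + 1)) ^ 2
        ≤ (8 * c ^ 2 * L + 1 / 4) ^ 2 := by
      rw [expand]
      nlinarith [mul_le_mul_of_nonneg_left hm16 (by positivity : (0:ℝ) ≤ 4 * c ^ 2 * L)]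
    nlinarith [hsq, mul_nonneg (mul_nonneg (by positivity : (0:ℝ) ≤ 2 * c) (Real.sqrt_nonneg L))
      (Real.sqrt_nonneg ((m : ℝ) + 1)), (by positivity : (0:ℝ) ≤ 8 * c ^ 2 * L)]
  have hdelta : (∑ j ∈ Finset.Ico a (a + l), pr c n (j + 1))
      - (∑ j ∈ Finset.Ico 0 l, pr c n (j + 1)) - 1 ≤ -(c * Real.sqrt l * Real.sqrt L) := by
    nlinarith [hup, hlow, hkey, hm16']
  -- final exponent bound
  have hfinal : lam * ((∑ i : Fin n, ((1 - pr c n (i.1 + 1)) * g i false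
        + pr c n (i.1 + 1) * g i true)) - ((l : ℝ) + 1))
      + lam ^ 2 * (∑ i : Fin n, (g i true - g i false) ^ 2) / 8 ≤ -(c ^ 2) * L := by
    rw [hmu, hr]
    have h1 : lam * ((∑ j ∈ Finset.Ico a (a + l), pr c n (j + 1)) + (l : ℝ)
          - (∑ j ∈ Finset.Ico 0 l, pr c n (j + 1)) - ((l : ℝ) + 1))
        ≤ lam * (-(c * Real.sqrt l * Real.sqrt L)) := by
      apply mul_le_mul_of_nonneg_left _ hlam0
      linarith [hdelta]
    have h2 : lam * (-(c * Real.sqrt l * Real.sqrt L)) = -(2 * c ^ 2 * L) := by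
      calc lam * (-(c * Real.sqrt l * Real.sqrt L))
          = -(2 * c ^ 2) * ((Real.sqrt (L / l) * Real.sqrt l) * Real.sqrt L) := by
            rw [hlam]; ring
        _ = -(2 * c ^ 2) * (Real.sqrt L * Real.sqrt L) := by rw [hsl]
        _ = -(2 * c ^ 2 * L) := by rw [Real.mul_self_sqrt hL0]; ring
    have h3 : lam ^ 2 * (2 * (l : ℝ)) / 8 = c ^ 2 * L := by
      rw [hlam2]
      field_simp
      ring
    have hl0' : (0:ℝ) < l := by exact_mod_cast hl0
    calc lam * ((∑ j ∈ Finset.Ico a (a + l), pr c n (j + 1)) + (l : ℝ)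
          - (∑ j ∈ Finset.Ico 0 l, pr c n (j + 1)) - ((l : ℝ) + 1))
        + lam ^ 2 * (2 * (l : ℝ)) / 8
        ≤ -(2 * c ^ 2 * L) + c ^ 2 * L := by
          rw [← h2, ← h3]
          linarith [h1]
      _ = -(c ^ 2) * L := by ring
  calc ∑ w ∈ Finset.univ.filter (fun w : Fin n → Bool =>
        l ≤ a ∧ a + l ≤ n ∧ cnt (ext w) 0 l < cnt (ext w) a (a + l)), wordProb c n w
      ≤ ∑ w ∈ Finset.univ.filter
          (fun w : Fin n → Bool => ((l : ℝ) + 1) ≤ ∑ i : Fin n, g i (w i)), wordProb c n w :=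
        Finset.sum_le_sum_of_subset_of_nonneg hsub (fun w _ _ => wordProb_nonneg c hc n w)
    _ ≤ _ := hmain
    _ ≤ Real.exp (-(c ^ 2) * L) := Real.exp_le_exp.mpr hfinal

lemma coverage {n : ℕ} (w : ℕ → Bool) (h : ¬ IsPrefixNormal n w) :
    ∃ p : ℕ × ℕ, p.1 ≤ n ∧ p.2 ≤ n ∧ p.2 ≤ p.1 ∧ p.1 + p.2 ≤ n ∧
      cnt w 0 p.2 < cnt w p.1 (p.1 + p.2) := by
  unfold IsPrefixNormal at h
  push_neg at h
  obtain ⟨k, j, hk, hjk, hviol⟩ := h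
  rcases le_or_gt k j with hkj | hjk'
  · exact ⟨(j, k), by omega, by omega, hkj, by omega, by
      simpa using hviol⟩
  · refine ⟨(k, j), by omega, by omega, le_of_lt hjk', by omega, ?_⟩
    have h1 : cnt w j (j + k) = cnt w j k + cnt w k (j + k) :=
      cnt_split w j k (j + k) (le_of_lt hjk') (by omega)
    have h2 : cnt w 0 k = cnt w 0 j + cnt w j k :=
      cnt_split w 0 j k (Nat.zero_le j) (le_of_lt hjk')
    show cnt w 0 j < cnt w k (k + j)
    rw [Nat.add_comm k j]
    omega

lemma union_bound {α ι : Type*} [Fintype α] (s : Finset ι) (A : α → Prop) (B : ι → α → Prop)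
    [DecidablePred A] [∀ i, DecidablePred (B i)]
    (f : α → ℝ) (hf : ∀ x, 0 ≤ f x) (hcov : ∀ x, A x → ∃ i ∈ s, B i x) :
    ∑ x ∈ Finset.univ.filter A, f x ≤ ∑ i ∈ s, ∑ x ∈ Finset.univ.filter (B i), f x := by
  calc ∑ x ∈ Finset.univ.filter A, f x
      ≤ ∑ x ∈ Finset.univ.filter A, ∑ i ∈ s, (if B i x then f x else 0) := by
        apply Finset.sum_le_sum
        intro x hx
        simp only [Finset.mem_filter] at hx
        obtain ⟨i, his, hbi⟩ := hcov x hx.2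
        calc f x = (if B i x then f x else 0) := (if_pos hbi).symm
          _ ≤ ∑ i' ∈ s, (if B i' x then f x else 0) :=
            Finset.single_le_sum (f := fun i' => if B i' x then f x else 0)
              (fun i' _ => by by_cases hB : B i' x <;> simp [hB, hf x]) his
    _ = ∑ i ∈ s, ∑ x ∈ Finset.univ.filter A, (if B i x then f x else 0) := Finset.sum_comm
    _ ≤ ∑ i ∈ s, ∑ x ∈ Finset.univ.filter (B i), f x := by
        apply Finset.sum_le_sum
        intro i _
        calc ∑ x ∈ Finset.univ.filter A, (if B i x then f x else 0)
            ≤ ∑ x ∈ Finset.univ, (if B i x then f x else 0) :=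
              Finset.sum_le_sum_of_subset_of_nonneg (Finset.filter_subset _ _)
                (fun x _ _ => by by_cases hB : B i x <;> simp [hB, hf x])
          _ = ∑ x ∈ Finset.univ.filter (B i), f x := (Finset.sum_filter _ _).symm


open scoped Classical in
/-- Fix `c > √2`. For the random word of length `n` with independent letters,
where `w_k = 1` with probability `p_k`, the probability that `w` is prefix
normal tends to `1` as `n → ∞`. -/
theorem random_word_prefix_normal_whp (c : ℝ) (hc : Real.sqrt 2 < c) :
    Filter.Tendsto
      (fun n : ℕ =>
        ∑ w ∈ Finset.univ.filter (fun w : Fin n → Bool =>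
            IsPrefixNormal n (ext w)),
          wordProb c n w)
      Filter.atTop (nhds 1) := by
  have hc0 : 0 < c := lt_trans (Real.sqrt_pos.mpr two_pos) hc
  have hc2 : 2 < c ^ 2 := by
    nlinarith [Real.sq_sqrt (by norm_num : (0:ℝ) ≤ 2), Real.sqrt_nonneg 2]
  set bad : ℕ → ℝ := fun n =>
    ∑ w ∈ Finset.univ.filter (fun w : Fin n → Bool => ¬ IsPrefixNormal n (ext w)),
      wordProb c n w with hbad
  have hsplit : ∀ n : ℕ,
      (∑ w ∈ Finset.univ.filter (fun w : Fin n → Bool => IsPrefixNormal n (ext w)),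
        wordProb c n w) = 1 - bad n := by
    intro n
    have := Finset.sum_filter_add_sum_filter_not Finset.univ
      (fun w : Fin n → Bool => IsPrefixNormal n (ext w)) (wordProb c n)
    rw [sum_wordProb c n] at this
    simp only [hbad]
    linarith
  have hbad0 : ∀ n, 0 ≤ bad n := fun n =>
    Finset.sum_nonneg (fun w _ => wordProb_nonneg c hc0 n w)
  have hbadle : ∀ n : ℕ, bad n ≤ ((n:ℝ) + 1) ^ 2 * Real.exp (-(c ^ 2) * Real.log n) := by
    intro n
    have hub := union_bound (α := Fin n → Bool)
      ((Finset.range (n + 1)) ×ˢ (Finset.range (n + 1)))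
      (fun w => ¬ IsPrefixNormal n (ext w))
      (fun p w => p.2 ≤ p.1 ∧ p.1 + p.2 ≤ n ∧ cnt (ext w) 0 p.2 < cnt (ext w) p.1 (p.1 + p.2))
      (wordProb c n) (wordProb_nonneg c hc0 n)
      (fun w hw => by
        obtain ⟨p, h1, h2, h3, h4, h5⟩ := coverage (ext w) hw
        exact ⟨p, by simp [Finset.mem_product]; omega, h3, h4, h5⟩)
    simp only [hbad]
    calc (∑ w ∈ Finset.univ.filter (fun w : Fin n → Bool => ¬ IsPrefixNormal n (ext w)),
          wordProb c n w)
        ≤ ∑ p ∈ (Finset.range (n + 1)) ×ˢ (Finset.range (n + 1)),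
          ∑ w ∈ Finset.univ.filter (fun w : Fin n → Bool =>
            p.2 ≤ p.1 ∧ p.1 + p.2 ≤ n ∧ cnt (ext w) 0 p.2 < cnt (ext w) p.1 (p.1 + p.2)),
            wordProb c n w := hub
      _ ≤ ∑ p ∈ (Finset.range (n + 1)) ×ˢ (Finset.range (n + 1)),
            Real.exp (-(c ^ 2) * Real.log n) := by
          apply Finset.sum_le_sum
          intro p _
          exact pair_bound c hc0 n p.1 p.2
      _ = ((n:ℝ) + 1) ^ 2 * Real.exp (-(c ^ 2) * Real.log n) := by
          rw [Finset.sum_const, Finset.card_product, Finset.card_range]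
          push_cast
          ring
  -- the bound tends to zero
  have hβ : Filter.Tendsto (fun n : ℕ => ((n:ℝ) + 1) ^ 2 * Real.exp (-(c ^ 2) * Real.log n))
      Filter.atTop (nhds 0) := by
    have hγ : Filter.Tendsto (fun n : ℕ => 4 * (n:ℝ) ^ ((2:ℝ) - c ^ 2))
        Filter.atTop (nhds 0) := by
      have h1 : Filter.Tendsto (fun x : ℝ => x ^ (-(c ^ 2 - 2))) Filter.atTop (nhds 0) :=
        tendsto_rpow_neg_atTop (by linarith)
      have h2 := (h1.comp tendsto_natCast_atTop_atTop (α := ℕ)).const_mul (4:ℝ)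
      simpa [mul_zero, Function.comp, neg_sub] using h2
    apply squeeze_zero' (Filter.Eventually.of_forall (fun n => by positivity))
    · filter_upwards [Filter.eventually_ge_atTop 1] with n hn
      have hn0 : (0:ℝ) < n := by exact_mod_cast hn
      have e1 : Real.exp (-(c ^ 2) * Real.log n) = (n:ℝ) ^ (-(c ^ 2) : ℝ) := by
        rw [Real.rpow_def_of_pos hn0]
        ring_nf
      have hn1 : (1:ℝ) ≤ (n:ℝ) := by exact_mod_cast hn
      have e2 : ((n:ℝ) + 1) ^ 2 ≤ 4 * (n:ℝ) ^ (2:ℝ) := by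
        rw [Real.rpow_two]
        nlinarith [hn1]
      calc ((n:ℝ) + 1) ^ 2 * Real.exp (-(c ^ 2) * Real.log n)
          ≤ (4 * (n:ℝ) ^ (2:ℝ)) * (n:ℝ) ^ (-(c ^ 2) : ℝ) := by
            rw [e1]
            apply mul_le_mul_of_nonneg_right e2 (Real.rpow_nonneg hn0.le _)
        _ = 4 * (n:ℝ) ^ ((2:ℝ) - c ^ 2) := by
            rw [mul_assoc, ← Real.rpow_add hn0]
            ring_nf
    · exact hγ
  have hbadlim : Filter.Tendsto bad Filter.atTop (nhds 0) :=
    squeeze_zero' (Filter.Eventually.of_forall hbad0)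
      (Filter.Eventually.of_forall hbadle) hβ
  have := (tendsto_const_nhds (x := (1:ℝ)) (f := Filter.atTop (α := ℕ))).sub hbadlim
  rw [sub_zero] at this
  apply this.congr
  intro n
  exact (hsplit n).symm
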